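/- For every nontrivial reduced word u over {a,b,c}^± (the rank-3 lifted PL homeomorphisms of ℝ), u(0) ≠ 0; hence the group F = ⟨a,b,c⟩ ≤ Homeo_+(ℝ) acts freely on the orbit of 0 and the map u ↦ u(0) is injective on F. -/

import Mathlib

/-- A letter of the alphabet `Σ_k^±`: `(i, true)` is the positive letter `s_{i+1}`,
`(i, false)` is the negative letter `S_{i+1} = s_{i+1}⁻¹`. -/
abbrev Letter (k : ℕ) := Fin k × Bool

/-- A word is reduced if no two adjacent letters cancel. -/
def Reduced {k : ℕ} (u : List (Letter k)) : Prop :=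
  u.Chain' fun x y => y ≠ (x.1, !x.2)

/-- Contribution of a length-2 factor `xy`:
`+1` if it has the form `s_j S_i` with `j > i`, `-1` if `S_j s_i` with `j > i`, else `0`. -/
def pairVal {k : ℕ} (x y : Letter k) : ℤ :=
  if x.2 = true ∧ y.2 = false ∧ y.1 < x.1 then 1
  else if x.2 = false ∧ y.2 = true ∧ y.1 < x.1 then -1
  else 0

/-- Sum of contributions of all length-2 factors of a word. -/
def pairSum {k : ℕ} : List (Letter k) → ℤ
  | x :: y :: t => pairVal x y + pairSum (y :: t)
  | _ => 0

/-- `+1/2`, `-1/2`, or `0` according to the last letter. -/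
def lastSign {k : ℕ} (u : List (Letter k)) : ℚ :=
  match u.getLast? with
  | none => 0
  | some x => if x.2 then 1/2 else -1/2

/-- The weight function `w` of Šunić's order. -/
def w {k : ℕ} (u : List (Letter k)) : ℚ := pairSum u + lastSign u

/-- The equivariant lift of the basic circle map `s_0` (case `k = 3`):
`s_0(x) = x/6` on `[0, 6/7)` and `s_0(x) = 6x - 5` on `[6/7, 1)`,
extended to `ℝ` so that `s0r (x + 1) = s0r x + 1` and `s0r 0 = 0`. -/
noncomputable def s0r (x : ℝ) : ℝ :=
  ⌊x⌋ + (if Int.fract x < 6/7 then Int.fract x / 6 else 6 * Int.fract x - 5)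

/-- The equivariant lift of the inverse of `s_0`. -/
noncomputable def s0rInv (y : ℝ) : ℝ :=
  ⌊y⌋ + (if Int.fract y < 1/7 then 6 * Int.fract y else (Int.fract y + 5) / 6)

/-- The lift to `ℝ` of the circle map `s_i(x) = s_0(x + (i-1)/7) + i/7` (`i = 1, 2, 3`);
these are the generators `a`, `b`, `c`.  Each lift commutes with `x ↦ x + 1` and
sends `0` into `(0,1)`. -/
noncomputable def liftGen (i : Fin 3) (x : ℝ) : ℝ :=
  s0r (x + (i : ℝ) / 7) + ((i : ℝ) + 1) / 7

/-- The lift to `ℝ` of the inverse circle map `s_i⁻¹`. -/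
noncomputable def liftGenInv (i : Fin 3) (y : ℝ) : ℝ :=
  s0rInv (y - ((i : ℝ) + 1) / 7) - (i : ℝ) / 7

/-- Action of a letter on `ℝ`. -/
noncomputable def letterAct (x : Letter 3) : ℝ → ℝ :=
  if x.2 then liftGen x.1 else liftGenInv x.1

/-- Action of a word (leftmost letter acts last, i.e. a left action). -/
noncomputable def wordAct : List (Letter 3) → ℝ → ℝ
  | [] => id
  | x :: t => letterAct x ∘ wordAct t




/-! ### Auxiliary machinery -/

lemma floor_eq_of (x : ℝ) (n : ℤ) (h1 : (n:ℝ) ≤ x) (h2 : x < n+1) : ⌊x⌋ = n := by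
  rw [Int.floor_eq_iff]; exact ⟨h1, h2⟩

lemma fract_eq_of (x : ℝ) (n : ℤ) (h1 : (n:ℝ) ≤ x) (h2 : x < n+1) : Int.fract x = x - n := by
  rw [Int.fract, floor_eq_of x n h1 h2]

lemma s0r_low (n : ℤ) (x : ℝ) (h1 : (n:ℝ) ≤ x) (h2 : x ≤ n + 6/7) : s0r x = n + (x - n)/6 := by
  rcases lt_or_eq_of_le h2 with h | h
  · rw [s0r, floor_eq_of x n h1 (by linarith), fract_eq_of x n h1 (by linarith),
      if_pos (by linarith)]
  · rw [s0r, h, fract_eq_of _ n (by linarith) (by push_cast; linarith),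
      floor_eq_of _ n (by linarith) (by push_cast; linarith)]
    norm_num

lemma s0r_high (n : ℤ) (x : ℝ) (h1 : (n:ℝ) + 6/7 ≤ x) (h2 : x ≤ n + 1) :
    s0r x = n + 6*(x - n) - 5 := by
  rcases lt_or_eq_of_le h2 with h | h
  · rw [s0r, floor_eq_of x n (by linarith) (by linarith),
      fract_eq_of x n (by linarith) (by linarith), if_neg (by intro hc; linarith)]
    ring
  · rw [h, show (n:ℝ)+1 = ((n+1 : ℤ):ℝ) by push_cast; ring,
      s0r_low (n+1) _ (by norm_num) (by push_cast; linarith)]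
    push_cast; linarith

lemma s0rInv_low (n : ℤ) (x : ℝ) (h1 : (n:ℝ) ≤ x) (h2 : x ≤ n + 1/7) :
    s0rInv x = n + 6*(x - n) := by
  rcases lt_or_eq_of_le h2 with h | h
  · rw [s0rInv, floor_eq_of x n h1 (by linarith), fract_eq_of x n h1 (by linarith),
      if_pos (by linarith)]
  · rw [s0rInv, h, fract_eq_of _ n (by linarith) (by push_cast; linarith),
      floor_eq_of _ n (by linarith) (by push_cast; linarith)]
    norm_num

lemma s0rInv_high (n : ℤ) (x : ℝ) (h1 : (n:ℝ) + 1/7 ≤ x) (h2 : x ≤ n + 1) :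
    s0rInv x = n + (x - n + 5)/6 := by
  rcases lt_or_eq_of_le h2 with h | h
  · rw [s0rInv, floor_eq_of x n (by linarith) (by linarith),
      fract_eq_of x n (by linarith) (by linarith), if_neg (by intro hc; linarith)]
  · rw [h, show (n:ℝ)+1 = ((n+1 : ℤ):ℝ) by push_cast; ring,
      s0rInv_low (n+1) _ (by norm_num) (by push_cast; linarith)]
    push_cast; linarith

lemma s0r_add_int (x : ℝ) (m : ℤ) : s0r (x + m) = s0r x + m := by
  rw [s0r, s0r, Int.fract_add_intCast, Int.floor_add_intCast]; push_cast; ring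

lemma s0rInv_add_int (x : ℝ) (m : ℤ) : s0rInv (x + m) = s0rInv x + m := by
  rw [s0rInv, s0rInv, Int.fract_add_intCast, Int.floor_add_intCast]; push_cast; ring

lemma s0rInv_s0r (x : ℝ) : s0rInv (s0r x) = x := by
  have hf0 := Int.fract_nonneg x
  have hf1 := Int.fract_lt_one x
  have hx : x = ⌊x⌋ + Int.fract x := by rw [Int.fract]; ring
  rw [s0r]
  by_cases h : Int.fract x < 6/7
  · rw [if_pos h, s0rInv_low ⌊x⌋ _ (by linarith) (by linarith)]
    linarith
  · rw [if_neg h, s0rInv_high ⌊x⌋ _ (by push_cast at h ⊢; linarith) (by linarith)]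
    push_cast at h; linarith

lemma s0r_s0rInv (x : ℝ) : s0r (s0rInv x) = x := by
  have hf0 := Int.fract_nonneg x
  have hf1 := Int.fract_lt_one x
  have hx : x = ⌊x⌋ + Int.fract x := by rw [Int.fract]; ring
  rw [s0rInv]
  by_cases h : Int.fract x < 1/7
  · rw [if_pos h, s0r_low ⌊x⌋ _ (by linarith) (by linarith)]
    linarith
  · rw [if_neg h, s0r_high ⌊x⌋ _ (by push_cast at h ⊢; linarith) (by linarith)]
    push_cast at h; linarith

lemma letterAct_pos (i : Fin 3) (t : ℝ) :
    letterAct (i, true) t = s0r (t + (i:ℝ)/7) + ((i:ℝ)+1)/7 := rfl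

lemma letterAct_neg (i : Fin 3) (t : ℝ) :
    letterAct (i, false) t = s0rInv (t - ((i:ℝ)+1)/7) - (i:ℝ)/7 := rfl

lemma letterAct_add_int (x : Letter 3) (t : ℝ) (m : ℤ) :
    letterAct x (t + m) = letterAct x t + m := by
  obtain ⟨i, b⟩ := x
  cases b
  · rw [letterAct_neg, letterAct_neg,
      show t + (m:ℝ) - ((i:ℝ)+1)/7 = (t - ((i:ℝ)+1)/7) + m by ring, s0rInv_add_int]
    ring
  · rw [letterAct_pos, letterAct_pos,
      show t + (m:ℝ) + (i:ℝ)/7 = (t + (i:ℝ)/7) + m by ring, s0r_add_int]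
    ring

lemma letterAct_inv (x : Letter 3) (t : ℝ) :
    letterAct (x.1, !x.2) (letterAct x t) = t := by
  obtain ⟨i, b⟩ := x
  cases b
  · show letterAct (i, true) (letterAct (i, false) t) = t
    rw [letterAct_neg, letterAct_pos,
      show s0rInv (t - ((i:ℝ)+1)/7) - (i:ℝ)/7 + (i:ℝ)/7 = s0rInv (t - ((i:ℝ)+1)/7) by ring,
      s0r_s0rInv]
    ring
  · show letterAct (i, false) (letterAct (i, true) t) = t
    rw [letterAct_pos, letterAct_neg,
      show s0r (t + (i:ℝ)/7) + ((i:ℝ)+1)/7 - ((i:ℝ)+1)/7 = s0r (t + (i:ℝ)/7) by ring,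
      s0rInv_s0r]
    ring

lemma letterAct_injective (x : Letter 3) : Function.Injective (letterAct x) := by
  intro s t h
  have h2 := congrArg (letterAct (x.1, !x.2)) h
  rwa [letterAct_inv, letterAct_inv] at h2

/-- The invariant zone for each head letter. -/
def Zone : Letter 3 → ℝ → Prop
  | (0, true), r => -5/14 ≤ r ∧ r < -3/14
  | (1, true), r => -3/14 < r ∧ r < -1/14
  | (2, true), r => -1/14 < r ∧ r < 1/14
  | (2, false), r => 1/14 < r ∧ r < 3/14
  | (1, false), r => 3/14 < r ∧ r < 5/14
  | (0, false), r => 5/14 < r ∧ r ≤ 10/21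

lemma zone_bounds (x : Letter 3) (r : ℝ) (h : Zone x r) : -5/14 ≤ r ∧ r ≤ 10/21 := by
  obtain ⟨i, b⟩ := x
  fin_cases i <;> cases b <;> (obtain ⟨h1, h2⟩ := h; exact ⟨by linarith, by linarith⟩)

lemma head_det (x y : Letter 3) (r : ℝ) (hx : Zone x r) (hy : Zone y r) : x = y := by
  obtain ⟨i, bx⟩ := x
  obtain ⟨j, byy⟩ := y
  fin_cases i <;> fin_cases j <;> cases bx <;> cases byy <;>
    first
      | rfl
      | (exfalso
         obtain ⟨a1, a2⟩ := hx
         obtain ⟨b1, b2⟩ := hy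
         linarith)

lemma tr_0T_0T (r : ℝ) (hr : Zone ((0:Fin 3), true) r) :
    Zone ((0:Fin 3), true) (letterAct ((0:Fin 3), true) (1/2 + r) - 1/2 - (pairVal ((0:Fin 3), true) ((0:Fin 3), true) : ℝ)) := by
  obtain ⟨h1, h2⟩ := hr
  rw [show (pairVal ((0:Fin 3), true) ((0:Fin 3), true) : ℝ) = 0 from by
        rw [show pairVal ((0:Fin 3), true) ((0:Fin 3), true) = (0 : ℤ) from by decide]; norm_num,
      letterAct_pos, show (((0:Fin 3)):ℝ) = 0 from by norm_num,
      s0r_low (0 : ℤ) _ (by push_cast; linarith) (by push_cast; linarith)]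
  exact ⟨by push_cast; linarith, by push_cast; linarith⟩

lemma tr_0T_1T (r : ℝ) (hr : Zone ((1:Fin 3), true) r) :
    Zone ((0:Fin 3), true) (letterAct ((0:Fin 3), true) (1/2 + r) - 1/2 - (pairVal ((0:Fin 3), true) ((1:Fin 3), true) : ℝ)) := by
  obtain ⟨h1, h2⟩ := hr
  rw [show (pairVal ((0:Fin 3), true) ((1:Fin 3), true) : ℝ) = 0 from by
        rw [show pairVal ((0:Fin 3), true) ((1:Fin 3), true) = (0 : ℤ) from by decide]; norm_num,
      letterAct_pos, show (((0:Fin 3)):ℝ) = 0 from by norm_num,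
      s0r_low (0 : ℤ) _ (by push_cast; linarith) (by push_cast; linarith)]
  exact ⟨by push_cast; linarith, by push_cast; linarith⟩

lemma tr_0T_1F (r : ℝ) (hr : Zone ((1:Fin 3), false) r) :
    Zone ((0:Fin 3), true) (letterAct ((0:Fin 3), true) (1/2 + r) - 1/2 - (pairVal ((0:Fin 3), true) ((1:Fin 3), false) : ℝ)) := by
  obtain ⟨h1, h2⟩ := hr
  rw [show (pairVal ((0:Fin 3), true) ((1:Fin 3), false) : ℝ) = 0 from by
        rw [show pairVal ((0:Fin 3), true) ((1:Fin 3), false) = (0 : ℤ) from by decide]; norm_num,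
      letterAct_pos, show (((0:Fin 3)):ℝ) = 0 from by norm_num,
      s0r_low (0 : ℤ) _ (by push_cast; linarith) (by push_cast; linarith)]
  exact ⟨by push_cast; linarith, by push_cast; linarith⟩

lemma tr_0T_2T (r : ℝ) (hr : Zone ((2:Fin 3), true) r) :
    Zone ((0:Fin 3), true) (letterAct ((0:Fin 3), true) (1/2 + r) - 1/2 - (pairVal ((0:Fin 3), true) ((2:Fin 3), true) : ℝ)) := by
  obtain ⟨h1, h2⟩ := hr
  rw [show (pairVal ((0:Fin 3), true) ((2:Fin 3), true) : ℝ) = 0 from by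
        rw [show pairVal ((0:Fin 3), true) ((2:Fin 3), true) = (0 : ℤ) from by decide]; norm_num,
      letterAct_pos, show (((0:Fin 3)):ℝ) = 0 from by norm_num,
      s0r_low (0 : ℤ) _ (by push_cast; linarith) (by push_cast; linarith)]
  exact ⟨by push_cast; linarith, by push_cast; linarith⟩

lemma tr_0T_2F (r : ℝ) (hr : Zone ((2:Fin 3), false) r) :
    Zone ((0:Fin 3), true) (letterAct ((0:Fin 3), true) (1/2 + r) - 1/2 - (pairVal ((0:Fin 3), true) ((2:Fin 3), false) : ℝ)) := by
  obtain ⟨h1, h2⟩ := hr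
  rw [show (pairVal ((0:Fin 3), true) ((2:Fin 3), false) : ℝ) = 0 from by
        rw [show pairVal ((0:Fin 3), true) ((2:Fin 3), false) = (0 : ℤ) from by decide]; norm_num,
      letterAct_pos, show (((0:Fin 3)):ℝ) = 0 from by norm_num,
      s0r_low (0 : ℤ) _ (by push_cast; linarith) (by push_cast; linarith)]
  exact ⟨by push_cast; linarith, by push_cast; linarith⟩

lemma tr_0F_0F (r : ℝ) (hr : Zone ((0:Fin 3), false) r) :
    Zone ((0:Fin 3), false) (letterAct ((0:Fin 3), false) (1/2 + r) - 1/2 - (pairVal ((0:Fin 3), false) ((0:Fin 3), false) : ℝ)) := by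
  obtain ⟨h1, h2⟩ := hr
  rw [show (pairVal ((0:Fin 3), false) ((0:Fin 3), false) : ℝ) = 0 from by
        rw [show pairVal ((0:Fin 3), false) ((0:Fin 3), false) = (0 : ℤ) from by decide]; norm_num,
      letterAct_neg, show (((0:Fin 3)):ℝ) = 0 from by norm_num,
      s0rInv_high (0 : ℤ) _ (by push_cast; linarith) (by push_cast; linarith)]
  exact ⟨by push_cast; linarith, by push_cast; linarith⟩

lemma tr_0F_1T (r : ℝ) (hr : Zone ((1:Fin 3), true) r) :
    Zone ((0:Fin 3), false) (letterAct ((0:Fin 3), false) (1/2 + r) - 1/2 - (pairVal ((0:Fin 3), false) ((1:Fin 3), true) : ℝ)) := by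
  obtain ⟨h1, h2⟩ := hr
  rw [show (pairVal ((0:Fin 3), false) ((1:Fin 3), true) : ℝ) = 0 from by
        rw [show pairVal ((0:Fin 3), false) ((1:Fin 3), true) = (0 : ℤ) from by decide]; norm_num,
      letterAct_neg, show (((0:Fin 3)):ℝ) = 0 from by norm_num,
      s0rInv_high (0 : ℤ) _ (by push_cast; linarith) (by push_cast; linarith)]
  exact ⟨by push_cast; linarith, by push_cast; linarith⟩

lemma tr_0F_1F (r : ℝ) (hr : Zone ((1:Fin 3), false) r) :
    Zone ((0:Fin 3), false) (letterAct ((0:Fin 3), false) (1/2 + r) - 1/2 - (pairVal ((0:Fin 3), false) ((1:Fin 3), false) : ℝ)) := by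
  obtain ⟨h1, h2⟩ := hr
  rw [show (pairVal ((0:Fin 3), false) ((1:Fin 3), false) : ℝ) = 0 from by
        rw [show pairVal ((0:Fin 3), false) ((1:Fin 3), false) = (0 : ℤ) from by decide]; norm_num,
      letterAct_neg, show (((0:Fin 3)):ℝ) = 0 from by norm_num,
      s0rInv_high (0 : ℤ) _ (by push_cast; linarith) (by push_cast; linarith)]
  exact ⟨by push_cast; linarith, by push_cast; linarith⟩

lemma tr_0F_2T (r : ℝ) (hr : Zone ((2:Fin 3), true) r) :
    Zone ((0:Fin 3), false) (letterAct ((0:Fin 3), false) (1/2 + r) - 1/2 - (pairVal ((0:Fin 3), false) ((2:Fin 3), true) : ℝ)) := by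
  obtain ⟨h1, h2⟩ := hr
  rw [show (pairVal ((0:Fin 3), false) ((2:Fin 3), true) : ℝ) = 0 from by
        rw [show pairVal ((0:Fin 3), false) ((2:Fin 3), true) = (0 : ℤ) from by decide]; norm_num,
      letterAct_neg, show (((0:Fin 3)):ℝ) = 0 from by norm_num,
      s0rInv_high (0 : ℤ) _ (by push_cast; linarith) (by push_cast; linarith)]
  exact ⟨by push_cast; linarith, by push_cast; linarith⟩

lemma tr_0F_2F (r : ℝ) (hr : Zone ((2:Fin 3), false) r) :
    Zone ((0:Fin 3), false) (letterAct ((0:Fin 3), false) (1/2 + r) - 1/2 - (pairVal ((0:Fin 3), false) ((2:Fin 3), false) : ℝ)) := by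
  obtain ⟨h1, h2⟩ := hr
  rw [show (pairVal ((0:Fin 3), false) ((2:Fin 3), false) : ℝ) = 0 from by
        rw [show pairVal ((0:Fin 3), false) ((2:Fin 3), false) = (0 : ℤ) from by decide]; norm_num,
      letterAct_neg, show (((0:Fin 3)):ℝ) = 0 from by norm_num,
      s0rInv_high (0 : ℤ) _ (by push_cast; linarith) (by push_cast; linarith)]
  exact ⟨by push_cast; linarith, by push_cast; linarith⟩

lemma tr_1T_0T (r : ℝ) (hr : Zone ((0:Fin 3), true) r) :
    Zone ((1:Fin 3), true) (letterAct ((1:Fin 3), true) (1/2 + r) - 1/2 - (pairVal ((1:Fin 3), true) ((0:Fin 3), true) : ℝ)) := by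
  obtain ⟨h1, h2⟩ := hr
  rw [show (pairVal ((1:Fin 3), true) ((0:Fin 3), true) : ℝ) = 0 from by
        rw [show pairVal ((1:Fin 3), true) ((0:Fin 3), true) = (0 : ℤ) from by decide]; norm_num,
      letterAct_pos, show (((1:Fin 3)):ℝ) = 1 from by norm_num,
      s0r_low (0 : ℤ) _ (by push_cast; linarith) (by push_cast; linarith)]
  exact ⟨by push_cast; linarith, by push_cast; linarith⟩

lemma tr_1T_0F (r : ℝ) (hr : Zone ((0:Fin 3), false) r) :
    Zone ((1:Fin 3), true) (letterAct ((1:Fin 3), true) (1/2 + r) - 1/2 - (pairVal ((1:Fin 3), true) ((0:Fin 3), false) : ℝ)) := by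
  obtain ⟨h1, h2⟩ := hr
  rw [show (pairVal ((1:Fin 3), true) ((0:Fin 3), false) : ℝ) = 1 from by
        rw [show pairVal ((1:Fin 3), true) ((0:Fin 3), false) = (1 : ℤ) from by decide]; norm_num,
      letterAct_pos, show (((1:Fin 3)):ℝ) = 1 from by norm_num,
      s0r_low (1 : ℤ) _ (by push_cast; linarith) (by push_cast; linarith)]
  exact ⟨by push_cast; linarith, by push_cast; linarith⟩

lemma tr_1T_1T (r : ℝ) (hr : Zone ((1:Fin 3), true) r) :
    Zone ((1:Fin 3), true) (letterAct ((1:Fin 3), true) (1/2 + r) - 1/2 - (pairVal ((1:Fin 3), true) ((1:Fin 3), true) : ℝ)) := by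
  obtain ⟨h1, h2⟩ := hr
  rw [show (pairVal ((1:Fin 3), true) ((1:Fin 3), true) : ℝ) = 0 from by
        rw [show pairVal ((1:Fin 3), true) ((1:Fin 3), true) = (0 : ℤ) from by decide]; norm_num,
      letterAct_pos, show (((1:Fin 3)):ℝ) = 1 from by norm_num,
      s0r_low (0 : ℤ) _ (by push_cast; linarith) (by push_cast; linarith)]
  exact ⟨by push_cast; linarith, by push_cast; linarith⟩

lemma tr_1T_2T (r : ℝ) (hr : Zone ((2:Fin 3), true) r) :
    Zone ((1:Fin 3), true) (letterAct ((1:Fin 3), true) (1/2 + r) - 1/2 - (pairVal ((1:Fin 3), true) ((2:Fin 3), true) : ℝ)) := by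
  obtain ⟨h1, h2⟩ := hr
  rw [show (pairVal ((1:Fin 3), true) ((2:Fin 3), true) : ℝ) = 0 from by
        rw [show pairVal ((1:Fin 3), true) ((2:Fin 3), true) = (0 : ℤ) from by decide]; norm_num,
      letterAct_pos, show (((1:Fin 3)):ℝ) = 1 from by norm_num,
      s0r_low (0 : ℤ) _ (by push_cast; linarith) (by push_cast; linarith)]
  exact ⟨by push_cast; linarith, by push_cast; linarith⟩

lemma tr_1T_2F (r : ℝ) (hr : Zone ((2:Fin 3), false) r) :
    Zone ((1:Fin 3), true) (letterAct ((1:Fin 3), true) (1/2 + r) - 1/2 - (pairVal ((1:Fin 3), true) ((2:Fin 3), false) : ℝ)) := by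
  obtain ⟨h1, h2⟩ := hr
  rw [show (pairVal ((1:Fin 3), true) ((2:Fin 3), false) : ℝ) = 0 from by
        rw [show pairVal ((1:Fin 3), true) ((2:Fin 3), false) = (0 : ℤ) from by decide]; norm_num,
      letterAct_pos, show (((1:Fin 3)):ℝ) = 1 from by norm_num,
      s0r_low (0 : ℤ) _ (by push_cast; linarith) (by push_cast; linarith)]
  exact ⟨by push_cast; linarith, by push_cast; linarith⟩

lemma tr_1F_0T (r : ℝ) (hr : Zone ((0:Fin 3), true) r) :
    Zone ((1:Fin 3), false) (letterAct ((1:Fin 3), false) (1/2 + r) - 1/2 - (pairVal ((1:Fin 3), false) ((0:Fin 3), true) : ℝ)) := by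
  obtain ⟨h1, h2⟩ := hr
  rw [show (pairVal ((1:Fin 3), false) ((0:Fin 3), true) : ℝ) = -1 from by
        rw [show pairVal ((1:Fin 3), false) ((0:Fin 3), true) = (-1 : ℤ) from by decide]; norm_num,
      letterAct_neg, show (((1:Fin 3)):ℝ) = 1 from by norm_num,
      s0rInv_high (-1 : ℤ) _ (by push_cast; linarith) (by push_cast; linarith)]
  exact ⟨by push_cast; linarith, by push_cast; linarith⟩

lemma tr_1F_0F (r : ℝ) (hr : Zone ((0:Fin 3), false) r) :
    Zone ((1:Fin 3), false) (letterAct ((1:Fin 3), false) (1/2 + r) - 1/2 - (pairVal ((1:Fin 3), false) ((0:Fin 3), false) : ℝ)) := by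
  obtain ⟨h1, h2⟩ := hr
  rw [show (pairVal ((1:Fin 3), false) ((0:Fin 3), false) : ℝ) = 0 from by
        rw [show pairVal ((1:Fin 3), false) ((0:Fin 3), false) = (0 : ℤ) from by decide]; norm_num,
      letterAct_neg, show (((1:Fin 3)):ℝ) = 1 from by norm_num,
      s0rInv_high (0 : ℤ) _ (by push_cast; linarith) (by push_cast; linarith)]
  exact ⟨by push_cast; linarith, by push_cast; linarith⟩

lemma tr_1F_1F (r : ℝ) (hr : Zone ((1:Fin 3), false) r) :
    Zone ((1:Fin 3), false) (letterAct ((1:Fin 3), false) (1/2 + r) - 1/2 - (pairVal ((1:Fin 3), false) ((1:Fin 3), false) : ℝ)) := by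
  obtain ⟨h1, h2⟩ := hr
  rw [show (pairVal ((1:Fin 3), false) ((1:Fin 3), false) : ℝ) = 0 from by
        rw [show pairVal ((1:Fin 3), false) ((1:Fin 3), false) = (0 : ℤ) from by decide]; norm_num,
      letterAct_neg, show (((1:Fin 3)):ℝ) = 1 from by norm_num,
      s0rInv_high (0 : ℤ) _ (by push_cast; linarith) (by push_cast; linarith)]
  exact ⟨by push_cast; linarith, by push_cast; linarith⟩

lemma tr_1F_2T (r : ℝ) (hr : Zone ((2:Fin 3), true) r) :
    Zone ((1:Fin 3), false) (letterAct ((1:Fin 3), false) (1/2 + r) - 1/2 - (pairVal ((1:Fin 3), false) ((2:Fin 3), true) : ℝ)) := by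
  obtain ⟨h1, h2⟩ := hr
  rw [show (pairVal ((1:Fin 3), false) ((2:Fin 3), true) : ℝ) = 0 from by
        rw [show pairVal ((1:Fin 3), false) ((2:Fin 3), true) = (0 : ℤ) from by decide]; norm_num,
      letterAct_neg, show (((1:Fin 3)):ℝ) = 1 from by norm_num,
      s0rInv_high (0 : ℤ) _ (by push_cast; linarith) (by push_cast; linarith)]
  exact ⟨by push_cast; linarith, by push_cast; linarith⟩

lemma tr_1F_2F (r : ℝ) (hr : Zone ((2:Fin 3), false) r) :
    Zone ((1:Fin 3), false) (letterAct ((1:Fin 3), false) (1/2 + r) - 1/2 - (pairVal ((1:Fin 3), false) ((2:Fin 3), false) : ℝ)) := by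
  obtain ⟨h1, h2⟩ := hr
  rw [show (pairVal ((1:Fin 3), false) ((2:Fin 3), false) : ℝ) = 0 from by
        rw [show pairVal ((1:Fin 3), false) ((2:Fin 3), false) = (0 : ℤ) from by decide]; norm_num,
      letterAct_neg, show (((1:Fin 3)):ℝ) = 1 from by norm_num,
      s0rInv_high (0 : ℤ) _ (by push_cast; linarith) (by push_cast; linarith)]
  exact ⟨by push_cast; linarith, by push_cast; linarith⟩

lemma tr_2T_0T (r : ℝ) (hr : Zone ((0:Fin 3), true) r) :
    Zone ((2:Fin 3), true) (letterAct ((2:Fin 3), true) (1/2 + r) - 1/2 - (pairVal ((2:Fin 3), true) ((0:Fin 3), true) : ℝ)) := by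
  obtain ⟨h1, h2⟩ := hr
  rw [show (pairVal ((2:Fin 3), true) ((0:Fin 3), true) : ℝ) = 0 from by
        rw [show pairVal ((2:Fin 3), true) ((0:Fin 3), true) = (0 : ℤ) from by decide]; norm_num,
      letterAct_pos, show (((2:Fin 3)):ℝ) = 2 from by norm_num,
      s0r_low (0 : ℤ) _ (by push_cast; linarith) (by push_cast; linarith)]
  exact ⟨by push_cast; linarith, by push_cast; linarith⟩

lemma tr_2T_0F (r : ℝ) (hr : Zone ((0:Fin 3), false) r) :
    Zone ((2:Fin 3), true) (letterAct ((2:Fin 3), true) (1/2 + r) - 1/2 - (pairVal ((2:Fin 3), true) ((0:Fin 3), false) : ℝ)) := by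
  obtain ⟨h1, h2⟩ := hr
  rw [show (pairVal ((2:Fin 3), true) ((0:Fin 3), false) : ℝ) = 1 from by
        rw [show pairVal ((2:Fin 3), true) ((0:Fin 3), false) = (1 : ℤ) from by decide]; norm_num,
      letterAct_pos, show (((2:Fin 3)):ℝ) = 2 from by norm_num,
      s0r_low (1 : ℤ) _ (by push_cast; linarith) (by push_cast; linarith)]
  exact ⟨by push_cast; linarith, by push_cast; linarith⟩

lemma tr_2T_1T (r : ℝ) (hr : Zone ((1:Fin 3), true) r) :
    Zone ((2:Fin 3), true) (letterAct ((2:Fin 3), true) (1/2 + r) - 1/2 - (pairVal ((2:Fin 3), true) ((1:Fin 3), true) : ℝ)) := by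
  obtain ⟨h1, h2⟩ := hr
  rw [show (pairVal ((2:Fin 3), true) ((1:Fin 3), true) : ℝ) = 0 from by
        rw [show pairVal ((2:Fin 3), true) ((1:Fin 3), true) = (0 : ℤ) from by decide]; norm_num,
      letterAct_pos, show (((2:Fin 3)):ℝ) = 2 from by norm_num,
      s0r_low (0 : ℤ) _ (by push_cast; linarith) (by push_cast; linarith)]
  exact ⟨by push_cast; linarith, by push_cast; linarith⟩

lemma tr_2T_1F (r : ℝ) (hr : Zone ((1:Fin 3), false) r) :
    Zone ((2:Fin 3), true) (letterAct ((2:Fin 3), true) (1/2 + r) - 1/2 - (pairVal ((2:Fin 3), true) ((1:Fin 3), false) : ℝ)) := by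
  obtain ⟨h1, h2⟩ := hr
  rw [show (pairVal ((2:Fin 3), true) ((1:Fin 3), false) : ℝ) = 1 from by
        rw [show pairVal ((2:Fin 3), true) ((1:Fin 3), false) = (1 : ℤ) from by decide]; norm_num,
      letterAct_pos, show (((2:Fin 3)):ℝ) = 2 from by norm_num,
      s0r_low (1 : ℤ) _ (by push_cast; linarith) (by push_cast; linarith)]
  exact ⟨by push_cast; linarith, by push_cast; linarith⟩

lemma tr_2T_2T (r : ℝ) (hr : Zone ((2:Fin 3), true) r) :
    Zone ((2:Fin 3), true) (letterAct ((2:Fin 3), true) (1/2 + r) - 1/2 - (pairVal ((2:Fin 3), true) ((2:Fin 3), true) : ℝ)) := by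
  obtain ⟨h1, h2⟩ := hr
  rw [show (pairVal ((2:Fin 3), true) ((2:Fin 3), true) : ℝ) = 0 from by
        rw [show pairVal ((2:Fin 3), true) ((2:Fin 3), true) = (0 : ℤ) from by decide]; norm_num,
      letterAct_pos, show (((2:Fin 3)):ℝ) = 2 from by norm_num,
      s0r_low (0 : ℤ) _ (by push_cast; linarith) (by push_cast; linarith)]
  exact ⟨by push_cast; linarith, by push_cast; linarith⟩

lemma tr_2F_0T (r : ℝ) (hr : Zone ((0:Fin 3), true) r) :
    Zone ((2:Fin 3), false) (letterAct ((2:Fin 3), false) (1/2 + r) - 1/2 - (pairVal ((2:Fin 3), false) ((0:Fin 3), true) : ℝ)) := by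
  obtain ⟨h1, h2⟩ := hr
  rw [show (pairVal ((2:Fin 3), false) ((0:Fin 3), true) : ℝ) = -1 from by
        rw [show pairVal ((2:Fin 3), false) ((0:Fin 3), true) = (-1 : ℤ) from by decide]; norm_num,
      letterAct_neg, show (((2:Fin 3)):ℝ) = 2 from by norm_num,
      s0rInv_high (-1 : ℤ) _ (by push_cast; linarith) (by push_cast; linarith)]
  exact ⟨by push_cast; linarith, by push_cast; linarith⟩

lemma tr_2F_0F (r : ℝ) (hr : Zone ((0:Fin 3), false) r) :
    Zone ((2:Fin 3), false) (letterAct ((2:Fin 3), false) (1/2 + r) - 1/2 - (pairVal ((2:Fin 3), false) ((0:Fin 3), false) : ℝ)) := by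
  obtain ⟨h1, h2⟩ := hr
  rw [show (pairVal ((2:Fin 3), false) ((0:Fin 3), false) : ℝ) = 0 from by
        rw [show pairVal ((2:Fin 3), false) ((0:Fin 3), false) = (0 : ℤ) from by decide]; norm_num,
      letterAct_neg, show (((2:Fin 3)):ℝ) = 2 from by norm_num,
      s0rInv_high (0 : ℤ) _ (by push_cast; linarith) (by push_cast; linarith)]
  exact ⟨by push_cast; linarith, by push_cast; linarith⟩

lemma tr_2F_1T (r : ℝ) (hr : Zone ((1:Fin 3), true) r) :
    Zone ((2:Fin 3), false) (letterAct ((2:Fin 3), false) (1/2 + r) - 1/2 - (pairVal ((2:Fin 3), false) ((1:Fin 3), true) : ℝ)) := by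
  obtain ⟨h1, h2⟩ := hr
  rw [show (pairVal ((2:Fin 3), false) ((1:Fin 3), true) : ℝ) = -1 from by
        rw [show pairVal ((2:Fin 3), false) ((1:Fin 3), true) = (-1 : ℤ) from by decide]; norm_num,
      letterAct_neg, show (((2:Fin 3)):ℝ) = 2 from by norm_num,
      s0rInv_high (-1 : ℤ) _ (by push_cast; linarith) (by push_cast; linarith)]
  exact ⟨by push_cast; linarith, by push_cast; linarith⟩

lemma tr_2F_1F (r : ℝ) (hr : Zone ((1:Fin 3), false) r) :
    Zone ((2:Fin 3), false) (letterAct ((2:Fin 3), false) (1/2 + r) - 1/2 - (pairVal ((2:Fin 3), false) ((1:Fin 3), false) : ℝ)) := by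
  obtain ⟨h1, h2⟩ := hr
  rw [show (pairVal ((2:Fin 3), false) ((1:Fin 3), false) : ℝ) = 0 from by
        rw [show pairVal ((2:Fin 3), false) ((1:Fin 3), false) = (0 : ℤ) from by decide]; norm_num,
      letterAct_neg, show (((2:Fin 3)):ℝ) = 2 from by norm_num,
      s0rInv_high (0 : ℤ) _ (by push_cast; linarith) (by push_cast; linarith)]
  exact ⟨by push_cast; linarith, by push_cast; linarith⟩

lemma tr_2F_2F (r : ℝ) (hr : Zone ((2:Fin 3), false) r) :
    Zone ((2:Fin 3), false) (letterAct ((2:Fin 3), false) (1/2 + r) - 1/2 - (pairVal ((2:Fin 3), false) ((2:Fin 3), false) : ℝ)) := by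
  obtain ⟨h1, h2⟩ := hr
  rw [show (pairVal ((2:Fin 3), false) ((2:Fin 3), false) : ℝ) = 0 from by
        rw [show pairVal ((2:Fin 3), false) ((2:Fin 3), false) = (0 : ℤ) from by decide]; norm_num,
      letterAct_neg, show (((2:Fin 3)):ℝ) = 2 from by norm_num,
      s0rInv_high (0 : ℤ) _ (by push_cast; linarith) (by push_cast; linarith)]
  exact ⟨by push_cast; linarith, by push_cast; linarith⟩

lemma base_0T : Zone ((0:Fin 3), true) (letterAct ((0:Fin 3), true) 0 - (1/2 : ℝ)) := by
  rw [letterAct_pos, show (((0:Fin 3)):ℝ) = 0 from by norm_num,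
      s0r_low (0 : ℤ) _ (by push_cast; linarith) (by push_cast; linarith)]
  exact ⟨by push_cast; linarith, by push_cast; linarith⟩

lemma base_0F : Zone ((0:Fin 3), false) (letterAct ((0:Fin 3), false) 0 - (-1/2 : ℝ)) := by
  rw [letterAct_neg, show (((0:Fin 3)):ℝ) = 0 from by norm_num,
      s0rInv_high (-1 : ℤ) _ (by push_cast; linarith) (by push_cast; linarith)]
  exact ⟨by push_cast; linarith, by push_cast; linarith⟩

lemma base_1T : Zone ((1:Fin 3), true) (letterAct ((1:Fin 3), true) 0 - (1/2 : ℝ)) := by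
  rw [letterAct_pos, show (((1:Fin 3)):ℝ) = 1 from by norm_num,
      s0r_low (0 : ℤ) _ (by push_cast; linarith) (by push_cast; linarith)]
  exact ⟨by push_cast; linarith, by push_cast; linarith⟩

lemma base_1F : Zone ((1:Fin 3), false) (letterAct ((1:Fin 3), false) 0 - (-1/2 : ℝ)) := by
  rw [letterAct_neg, show (((1:Fin 3)):ℝ) = 1 from by norm_num,
      s0rInv_high (-1 : ℤ) _ (by push_cast; linarith) (by push_cast; linarith)]
  exact ⟨by push_cast; linarith, by push_cast; linarith⟩

lemma base_2T : Zone ((2:Fin 3), true) (letterAct ((2:Fin 3), true) 0 - (1/2 : ℝ)) := by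
  rw [letterAct_pos, show (((2:Fin 3)):ℝ) = 2 from by norm_num,
      s0r_low (0 : ℤ) _ (by push_cast; linarith) (by push_cast; linarith)]
  exact ⟨by push_cast; linarith, by push_cast; linarith⟩

lemma base_2F : Zone ((2:Fin 3), false) (letterAct ((2:Fin 3), false) 0 - (-1/2 : ℝ)) := by
  rw [letterAct_neg, show (((2:Fin 3)):ℝ) = 2 from by norm_num,
      s0rInv_high (-1 : ℤ) _ (by push_cast; linarith) (by push_cast; linarith)]
  exact ⟨by push_cast; linarith, by push_cast; linarith⟩

lemma trans_zone (x y : Letter 3) (hxy : y ≠ (x.1, !x.2)) (r : ℝ) (hr : Zone y r) :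
    Zone x (letterAct x (1/2 + r) - 1/2 - (pairVal x y : ℝ)) := by
  obtain ⟨i, bx⟩ := x
  obtain ⟨j, byy⟩ := y
  fin_cases i <;> fin_cases j <;> cases bx <;> cases byy <;>
    first
      | exact absurd rfl hxy
      | exact tr_0T_0T r hr
      | exact tr_0T_1T r hr
      | exact tr_0T_1F r hr
      | exact tr_0T_2T r hr
      | exact tr_0T_2F r hr
      | exact tr_0F_0F r hr
      | exact tr_0F_1T r hr
      | exact tr_0F_1F r hr
      | exact tr_0F_2T r hr
      | exact tr_0F_2F r hr
      | exact tr_1T_0T r hr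
      | exact tr_1T_0F r hr
      | exact tr_1T_1T r hr
      | exact tr_1T_2T r hr
      | exact tr_1T_2F r hr
      | exact tr_1F_0T r hr
      | exact tr_1F_0F r hr
      | exact tr_1F_1F r hr
      | exact tr_1F_2T r hr
      | exact tr_1F_2F r hr
      | exact tr_2T_0T r hr
      | exact tr_2T_0F r hr
      | exact tr_2T_1T r hr
      | exact tr_2T_1F r hr
      | exact tr_2T_2T r hr
      | exact tr_2F_0T r hr
      | exact tr_2F_0F r hr
      | exact tr_2F_1T r hr
      | exact tr_2F_1F r hr
      | exact tr_2F_2F r hr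


lemma w_single (x : Letter 3) : w [x] = if x.2 then (1/2 : ℚ) else -1/2 := by
  have h1 : pairSum [x] = 0 := rfl
  have h2 : lastSign [x] = if x.2 then (1/2 : ℚ) else -1/2 := rfl
  rw [w, h1, h2]
  push_cast
  ring

lemma w_cons_cons (x y : Letter 3) (t : List (Letter 3)) :
    w (x :: y :: t) = pairVal x y + w (y :: t) := by
  have h1 : pairSum (x :: y :: t) = pairVal x y + pairSum (y :: t) := rfl
  have h2 : lastSign (x :: y :: t) = lastSign (y :: t) := by
    rw [lastSign, lastSign, List.getLast?_cons_cons]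
  rw [w, w, h1, h2]
  push_cast
  ring

lemma w_half (y : Letter 3) (t : List (Letter 3)) :
    ∃ m : ℤ, ((w (y :: t) : ℚ) : ℝ) = m + 1/2 := by
  obtain ⟨l, hl⟩ : ∃ l, (y :: t).getLast? = some l := by
    cases h : (y :: t).getLast? with
    | none => simp at h
    | some l => exact ⟨l, rfl⟩
  refine ⟨pairSum (y :: t) + (if l.2 then 0 else -1), ?_⟩
  have h2 : lastSign (y :: t) = if l.2 then (1/2 : ℚ) else -1/2 := by
    rw [lastSign, hl]
  rw [w, h2]
  cases hb : l.2
  all_goals norm_num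
  all_goals linarith

lemma wordAct_cons (x : Letter 3) (t : List (Letter 3)) (r : ℝ) :
    wordAct (x :: t) r = letterAct x (wordAct t r) := rfl

lemma main_inv : ∀ (t : List (Letter 3)) (x : Letter 3), Reduced (x :: t) →
    Zone x (wordAct (x :: t) 0 - ((w (x :: t) : ℚ) : ℝ)) := by
  intro t
  induction t with
  | nil =>
    intro x _
    obtain ⟨i, b⟩ := x
    have h0 : wordAct [((i : Fin 3), b)] 0 = letterAct (i, b) 0 := rfl
    cases b
    · rw [h0, show ((w [((i : Fin 3), false)] : ℚ) : ℝ) = (-1/2 : ℝ) by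
        rw [w_single]; norm_num]
      fin_cases i
      · exact base_0F
      · exact base_1F
      · exact base_2F
    · rw [h0, show ((w [((i : Fin 3), true)] : ℚ) : ℝ) = (1/2 : ℝ) by
        rw [w_single]; norm_num]
      fin_cases i
      · exact base_0T
      · exact base_1T
      · exact base_2T
  | cons y t' ih =>
    intro x hred
    obtain ⟨hxy, hred'⟩ := List.isChain_cons_cons.mp hred
    have hIy := ih y hred'
    obtain ⟨m, hm⟩ := w_half y t'
    have key := trans_zone x y hxy (wordAct (y :: t') 0 - ((w (y :: t') : ℚ) : ℝ)) hIy
    have e1 : (1:ℝ)/2 + (wordAct (y :: t') 0 - ((w (y :: t') : ℚ) : ℝ))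
        = wordAct (y :: t') 0 + ((-m : ℤ) : ℝ) := by push_cast; linarith
    rw [e1, letterAct_add_int] at key
    have e4 : letterAct x (wordAct (y :: t') 0) + ((-m : ℤ) : ℝ) - 1/2 - (pairVal x y : ℝ)
        = wordAct (x :: y :: t') 0 - ((w (x :: y :: t') : ℚ) : ℝ) := by
      rw [show wordAct (x :: y :: t') 0 = letterAct x (wordAct (y :: t') 0) from rfl,
        show ((w (x :: y :: t') : ℚ) : ℝ)
          = (pairVal x y : ℝ) + ((w (y :: t') : ℚ) : ℝ) by rw [w_cons_cons]; push_cast; ring]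
      push_cast
      linarith
    rwa [e4] at key

lemma part1 (u : List (Letter 3)) (hne : u ≠ []) (hr : Reduced u) : wordAct u 0 ≠ 0 := by
  cases u with
  | nil => exact absurd rfl hne
  | cons x t =>
    have hz := main_inv t x hr
    have hb := zone_bounds _ _ hz
    obtain ⟨m, hm⟩ := w_half x t
    intro h0
    rw [h0, hm] at hb
    obtain ⟨hb1, hb2⟩ := hb
    have hm1 : m < 0 := by
      have : (m : ℝ) < 0 := by linarith
      exact_mod_cast this
    have hm2 : (0:ℤ) < m + 1 := by
      have : (0:ℝ) < (m:ℝ) + 1 := by linarith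
      exact_mod_cast this
    omega

lemma part2 : ∀ u v : List (Letter 3), Reduced u → Reduced v →
    wordAct u 0 = wordAct v 0 → u = v := by
  intro u
  induction u with
  | nil =>
    intro v _ hv h
    cases v with
    | nil => rfl
    | cons y s =>
      exact absurd h.symm (part1 (y :: s) (by simp) hv)
  | cons x t ih =>
    intro v hu hv h
    cases v with
    | nil => exact absurd h (part1 (x :: t) (by simp) hu)
    | cons y s =>
      have hzu := main_inv t x hu
      have hzv := main_inv s y hv
      obtain ⟨m, hm⟩ := w_half x t
      obtain ⟨m', hm'⟩ := w_half y s
      have bu := zone_bounds _ _ hzu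
      have bv := zone_bounds _ _ hzv
      have hmm : m = m' := by
        have c1 : (m : ℝ) < (m' : ℝ) + 1 := by
          obtain ⟨x1, x2⟩ := bu; obtain ⟨y1, y2⟩ := bv
          rw [hm] at x1 x2; rw [hm'] at y1 y2; linarith
        have c2 : (m' : ℝ) < (m : ℝ) + 1 := by
          obtain ⟨x1, x2⟩ := bu; obtain ⟨y1, y2⟩ := bv
          rw [hm] at x1 x2; rw [hm'] at y1 y2; linarith
        have c1' : m < m' + 1 := by exact_mod_cast c1
        have c2' : m' < m + 1 := by exact_mod_cast c2
        omega
      have hrr : wordAct (x :: t) 0 - ((w (x :: t) : ℚ) : ℝ)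
          = wordAct (y :: s) 0 - ((w (y :: s) : ℚ) : ℝ) := by
        rw [hm, hm', h, hmm]
      have hxy : x = y := by
        apply head_det x y _ hzu
        rw [hrr]
        exact hzv
      subst hxy
      have ht : wordAct t 0 = wordAct s 0 := letterAct_injective x h
      rw [ih s (List.IsChain.tail hu) (List.IsChain.tail hv) ht]

/-- no nontrivial reduced word in the lifted PL homeomorphisms
`a, b, c` of `ℝ` fixes `0`; hence `F = ⟨a, b, c⟩` acts freely on the orbit of `0`
and `u ↦ u(0)` is injective. -/
theorem stmt16 :
    (∀ u : List (Letter 3), u ≠ [] → Reduced u → wordAct u 0 ≠ 0) ∧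
    (∀ u v : List (Letter 3), Reduced u → Reduced v →
      wordAct u 0 = wordAct v 0 → u = v) :=
  ⟨part1, part2⟩
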